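/- (Upper bound for controlled energy measurements.) Let U, S : ℝ → (d×d complex matrices) be families of unitary matrices differentiable at θ₀ (U(θ) = exp(−itH_θ) is the unitary encoding generated by a parameter-dependent Hamiltonian and S(θ) is the unitary diagonalizing H_θ). Let ρ₀ be a positive semi-definite d×d matrix with tr(ρ₀) = 1 and let V be any fixed unitary d×d matrix. Define Ũ(θ) := S(θ) V U(θ) and the probabilities p_j(θ) := (Ũ(θ) ρ₀ Ũ(θ)†)_{jj} for j = 1,…,d. Then the Fisher information of the controlled energy measurement, Σ_{j : p_j(θ₀) ≠ 0} (p_j′(θ₀))² / p_j(θ₀), is bounded above by [σ(g[U]) + σ(g[S])]², where g[U] := i U′(θ₀)U(θ₀)† and g[S] := i S′(θ₀)S(θ₀)† are the Hermitian local generators and σ(M) := λ_max(M) − λ_min(M) is the spectral gap. -/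

import Mathlib

open Matrix
open scoped ComplexOrder

/-- The spectral gap of a matrix: the difference between the largest and smallest eigenvalue
when the matrix is Hermitian (and `0` otherwise, by convention). -/
noncomputable def specGap {d : ℕ} [NeZero d] (M : Matrix (Fin d) (Fin d) ℂ) : ℝ :=
  if h : M.IsHermitian then
    Finset.univ.sup' Finset.univ_nonempty h.eigenvalues
      - Finset.univ.inf' Finset.univ_nonempty h.eigenvalues
  else 0

section Helpers

open scoped Matrix.Norms.L2Operator MatrixOrder

variable {d : ℕ}

lemma entry_mul {θ₀ : ℝ} {A B : ℝ → Matrix (Fin d) (Fin d) ℂ} {A' B' : Matrix (Fin d) (Fin d) ℂ}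
    (hA : ∀ i j, HasDerivAt (fun θ => A θ i j) (A' i j) θ₀)
    (hB : ∀ i j, HasDerivAt (fun θ => B θ i j) (B' i j) θ₀) (i j : Fin d) :
    HasDerivAt (fun θ => (A θ * B θ) i j) ((A' * B θ₀ + A θ₀ * B') i j) θ₀ := by
  simp only [Matrix.mul_apply, Matrix.add_apply]
  rw [← Finset.sum_add_distrib]
  exact HasDerivAt.fun_sum fun k _ => (hA i k).mul (hB k j)

lemma entry_const {θ₀ : ℝ} (V : Matrix (Fin d) (Fin d) ℂ) (i j : Fin d) :
    HasDerivAt (fun _ : ℝ => V i j) ((0 : Matrix (Fin d) (Fin d) ℂ) i j) θ₀ := by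
  simpa using hasDerivAt_const θ₀ (V i j)

lemma entry_ct {θ₀ : ℝ} {A : ℝ → Matrix (Fin d) (Fin d) ℂ} {A' : Matrix (Fin d) (Fin d) ℂ}
    (hA : ∀ i j, HasDerivAt (fun θ => A θ i j) (A' i j) θ₀) (i j : Fin d) :
    HasDerivAt (fun θ => (A θ)ᴴ i j) (A'ᴴ i j) θ₀ := by
  simpa only [Matrix.conjTranspose_apply] using (hA j i).star

lemma entry_re {θ₀ : ℝ} {f : ℝ → ℂ} {f' : ℂ} (h : HasDerivAt f f' θ₀) :
    HasDerivAt (fun θ => (f θ).re) f'.re θ₀ :=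
  Complex.reCLM.hasFDerivAt.comp_hasDerivAt θ₀ h

lemma skew_of_unitary {θ₀ : ℝ} {A : ℝ → Matrix (Fin d) (Fin d) ℂ} {A' : Matrix (Fin d) (Fin d) ℂ}
    (hAunit : ∀ θ, (A θ)ᴴ * A θ = 1)
    (hA : ∀ i j, HasDerivAt (fun θ => A θ i j) (A' i j) θ₀) :
    A' * (A θ₀)ᴴ + A θ₀ * A'ᴴ = 0 := by
  ext i j
  have h1 : HasDerivAt (fun θ => (A θ * (A θ)ᴴ) i j)
      ((A' * (A θ₀)ᴴ + A θ₀ * A'ᴴ) i j) θ₀ := entry_mul hA (entry_ct hA) i j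
  have h2 : (fun θ => (A θ * (A θ)ᴴ) i j) = fun _ => (1 : Matrix (Fin d) (Fin d) ℂ) i j := by
    funext θ; rw [mul_eq_one_comm.mp (hAunit θ)]
  rw [h2] at h1
  have := h1.unique (hasDerivAt_const _ _)
  simpa using this

lemma isHermitian_I_smul {X : Matrix (Fin d) (Fin d) ℂ} (hX : Xᴴ = -X) :
    (Complex.I • X).IsHermitian := by
  unfold Matrix.IsHermitian
  rw [Matrix.conjTranspose_smul, hX]
  simp [Complex.conj_I]

lemma opNorm_unitary [NeZero d] {Q : Matrix (Fin d) (Fin d) ℂ} (hQ : Qᴴ * Q = 1) : ‖Q‖ = 1 := by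
  have h : ‖Q‖ * ‖Q‖ = 1 := by
    rw [← Matrix.l2_opNorm_conjTranspose_mul_self, hQ, CStarRing.norm_one]
  rcases mul_self_eq_one_iff.mp h with h1 | h1
  · exact h1
  · have := norm_nonneg Q; linarith

lemma opNorm_diagonal_le (μ : Fin d → ℝ) {b : ℝ} (hb0 : 0 ≤ b) (hb : ∀ i, |μ i| ≤ b) :
    ‖(Matrix.diagonal (fun i => (μ i : ℂ)) : Matrix (Fin d) (Fin d) ℂ)‖ ≤ b := by
  rw [Matrix.l2_opNorm_def]
  refine ContinuousLinearMap.opNorm_le_bound _ hb0 fun x => ?_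
  show ‖(WithLp.equiv 2 (Fin d → ℂ)).symm
      (Matrix.diagonal (fun i => (μ i : ℂ)) *ᵥ (WithLp.equiv 2 (Fin d → ℂ)) x)‖ ≤ b * ‖x‖
  rw [EuclideanSpace.norm_eq, EuclideanSpace.norm_eq,
    ← Real.sqrt_sq hb0, ← Real.sqrt_mul (by positivity)]
  apply Real.sqrt_le_sqrt
  rw [Finset.mul_sum]
  apply Finset.sum_le_sum
  intro i _
  have h1 : ((WithLp.equiv 2 (Fin d → ℂ)).symm
      (Matrix.diagonal (fun i => (μ i : ℂ)) *ᵥ (WithLp.equiv 2 (Fin d → ℂ)) x)) i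
      = (μ i : ℂ) * x i := by
    simp [WithLp.equiv_symm_apply, Matrix.mulVec_diagonal]
  rw [h1, norm_mul, mul_pow, Complex.norm_real, Real.norm_eq_abs]
  have : |μ i| ^ 2 ≤ b ^ 2 := by
    have := hb i; nlinarith [abs_nonneg (μ i)]
  nlinarith [sq_nonneg ‖x i‖, norm_nonneg (x i), this, sq_nonneg (‖x i‖)]

lemma herm_shift_norm_le [NeZero d] {H : Matrix (Fin d) (Fin d) ℂ} (hH : H.IsHermitian) :
    ‖H - (((Finset.univ.sup' Finset.univ_nonempty hH.eigenvalues
        + Finset.univ.inf' Finset.univ_nonempty hH.eigenvalues) / 2 : ℝ) : ℂ)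
        • (1 : Matrix (Fin d) (Fin d) ℂ)‖ ≤ specGap H / 2 := by
  set lM := Finset.univ.sup' Finset.univ_nonempty hH.eigenvalues with hlM
  set lm := Finset.univ.inf' Finset.univ_nonempty hH.eigenvalues with hlm
  set c : ℝ := (lM + lm) / 2 with hc
  have hgap : specGap H = lM - lm := by rw [specGap, dif_pos hH]
  obtain ⟨i0⟩ : Nonempty (Fin d) := inferInstance
  have hmm : lm ≤ lM :=
    le_trans (Finset.inf'_le _ (Finset.mem_univ i0)) (Finset.le_sup' _ (Finset.mem_univ i0))
  set Q : Matrix (Fin d) (Fin d) ℂ := (hH.eigenvectorUnitary : Matrix (Fin d) (Fin d) ℂ) with hQdef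
  have hQ2 : Q * Qᴴ = 1 := by
    rw [← Matrix.star_eq_conjTranspose]
    exact (Matrix.mem_unitaryGroup_iff).mp hH.eigenvectorUnitary.2
  have hQ1 : Qᴴ * Q = 1 := mul_eq_one_comm.mp hQ2
  have hQ1' : (Qᴴ)ᴴ * Qᴴ = 1 := by rw [Matrix.conjTranspose_conjTranspose]; exact hQ2
  have hdecomp : H - (c : ℂ) • (1 : Matrix (Fin d) (Fin d) ℂ)
      = Q * Matrix.diagonal (fun i => ((hH.eigenvalues i - c : ℝ) : ℂ)) * Qᴴ := by
    conv_lhs => rw [hH.spectral_theorem]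
    have h1 : (c : ℂ) • (1 : Matrix (Fin d) (Fin d) ℂ)
        = Q * ((c : ℂ) • (1 : Matrix (Fin d) (Fin d) ℂ)) * Qᴴ := by
      rw [Matrix.mul_smul, Matrix.mul_one, Matrix.smul_mul, hQ2]
    rw [Unitary.conjStarAlgAut_apply]
    rw [Matrix.star_eq_conjTranspose] at *
    rw [h1, ← Matrix.sub_mul, ← Matrix.mul_sub]
    congr 1
    congr 1
    ext i j
    rcases eq_or_ne i j with rfl | hij
    · simp [Matrix.diagonal_apply_eq, Matrix.one_apply_eq, Function.comp, RCLike.ofReal_alg]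
    · simp [Matrix.diagonal_apply_ne _ hij, Matrix.one_apply_ne hij]
  rw [hgap, hdecomp]
  have hb0 : (0:ℝ) ≤ (lM - lm) / 2 := by linarith
  have hD : ‖(Matrix.diagonal (fun i => ((hH.eigenvalues i - c : ℝ) : ℂ)) :
      Matrix (Fin d) (Fin d) ℂ)‖ ≤ (lM - lm)/2 := by
    apply opNorm_diagonal_le _ hb0
    intro i
    have h1 : hH.eigenvalues i ≤ lM := Finset.le_sup' _ (Finset.mem_univ i)
    have h2 : lm ≤ hH.eigenvalues i := Finset.inf'_le _ (Finset.mem_univ i)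
    rw [abs_le, hc]; constructor <;> linarith
  calc ‖Q * Matrix.diagonal (fun i => ((hH.eigenvalues i - c : ℝ) : ℂ)) * Qᴴ‖
      ≤ ‖Q * Matrix.diagonal (fun i => ((hH.eigenvalues i - c : ℝ) : ℂ))‖ * ‖Qᴴ‖ :=
        Matrix.l2_opNorm_mul _ _
    _ ≤ (‖Q‖ * ‖Matrix.diagonal (fun i => ((hH.eigenvalues i - c : ℝ) : ℂ))‖) * ‖Qᴴ‖ := by
        gcongr; exact Matrix.l2_opNorm_mul _ _
    _ ≤ (lM - lm)/2 := by
        rw [opNorm_unitary hQ1, opNorm_unitary hQ1', one_mul, mul_one]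
        exact hD

lemma sand {W A B : Matrix (Fin d) (Fin d) ℂ} (hW : Wᴴ * W = 1) :
    (W * A * Wᴴ) * (W * B) = W * (A * B) := by
  rw [Matrix.mul_assoc (W * A) Wᴴ (W * B), ← Matrix.mul_assoc Wᴴ W B, hW, Matrix.one_mul,
    Matrix.mul_assoc]

lemma fisher_bound [NeZero d]
    (ρ₀ : Matrix (Fin d) (Fin d) ℂ) (hρ : ρ₀.PosSemidef) (hρtr : ρ₀.trace = 1)
    (M G : Matrix (Fin d) (Fin d) ℂ) (hM : Mᴴ * M = 1)
    (b : ℝ) (hb : ‖G‖ ≤ b)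
    (p' : Fin d → ℝ)
    (hp : ∀ j, p' j = 2 * ((G * (M * ρ₀ * Mᴴ)) j j).im) :
    ∑ j ∈ Finset.univ.filter (fun j => ((M * ρ₀ * Mᴴ) j j).re ≠ 0),
      (p' j)^2 / ((M * ρ₀ * Mᴴ) j j).re ≤ 4 * b^2 := by
  classical
  have hρA : (M * ρ₀ * Mᴴ).PosSemidef := hρ.mul_mul_conjTranspose_same M
  set A : Matrix (Fin d) (Fin d) ℂ := CFC.sqrt (M * ρ₀ * Mᴴ) with hAdef
  have hAh : Aᴴ = A := (CFC.sqrt_nonneg (M * ρ₀ * Mᴴ)).posSemidef.1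
  have hAA : A * A = M * ρ₀ * Mᴴ := CFC.sqrt_mul_sqrt_self _ hρA.nonneg
  have hstar : ∀ j k, A k j = star (A j k) := by
    intro j k
    conv_lhs => rw [← hAh, Matrix.conjTranspose_apply]
  have hpj : ∀ j, ((M * ρ₀ * Mᴴ) j j).re = ∑ k, ‖A j k‖^2 := by
    intro j
    rw [← hAA, Matrix.mul_apply, Complex.re_sum]
    apply Finset.sum_congr rfl
    intro k _
    rw [hstar j k, Complex.star_def, Complex.mul_conj]
    simp [Complex.normSq_eq_norm_sq, ← Complex.ofReal_pow]
  have htr : ∑ j, ((M * ρ₀ * Mᴴ) j j).re = 1 := by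
    have h1 : (M * ρ₀ * Mᴴ).trace = 1 := by
      rw [Matrix.trace_mul_cycle, hM, Matrix.one_mul, hρtr]
    have h2 : ∑ j, ((M * ρ₀ * Mᴴ) j j).re = ((M * ρ₀ * Mᴴ).trace).re := by
      rw [Matrix.trace, Complex.re_sum]; rfl
    rw [h2, h1, Complex.one_re]
  set q : Fin d → ℝ := fun j => ∑ k, ‖(G * A) j k‖^2 with hq
  have hq0 : ∀ j, 0 ≤ q j := fun j => Finset.sum_nonneg fun k _ => sq_nonneg _
  have key : ∀ j, ((M * ρ₀ * Mᴴ) j j).re ≠ 0 →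
      (p' j)^2 / ((M * ρ₀ * Mᴴ) j j).re ≤ 4 * q j := by
    intro j hj
    have h0 : 0 ≤ ((M * ρ₀ * Mᴴ) j j).re := by rw [hpj]; positivity
    have hpos : 0 < ((M * ρ₀ * Mᴴ) j j).re := lt_of_le_of_ne h0 (Ne.symm hj)
    have hz : (G * (M * ρ₀ * Mᴴ)) j j = ∑ k, (G * A) j k * star (A j k) := by
      rw [← hAA, ← Matrix.mul_assoc, Matrix.mul_apply]
      exact Finset.sum_congr rfl fun k _ => by rw [hstar j k]
    have habs : ‖(G * (M * ρ₀ * Mᴴ)) j j‖ ≤ ∑ k, ‖(G * A) j k‖ * ‖A j k‖ := by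
      rw [hz]
      refine le_trans (norm_sum_le _ _) (le_of_eq ?_)
      exact Finset.sum_congr rfl fun k _ => by rw [norm_mul, norm_star]
    have hcs : (∑ k, ‖(G * A) j k‖ * ‖A j k‖)^2 ≤ q j * ((M * ρ₀ * Mᴴ) j j).re := by
      rw [hpj]
      exact Finset.sum_mul_sq_le_sq_mul_sq Finset.univ _ _
    have him : (((G * (M * ρ₀ * Mᴴ)) j j).im)^2 ≤ q j * ((M * ρ₀ * Mᴴ) j j).re := by
      have h1 : |((G * (M * ρ₀ * Mᴴ)) j j).im| ≤ ‖(G * (M * ρ₀ * Mᴴ)) j j‖ :=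
        Complex.abs_im_le_norm _
      have h2 : (0:ℝ) ≤ ∑ k, ‖(G * A) j k‖ * ‖A j k‖ :=
        Finset.sum_nonneg fun k _ => mul_nonneg (norm_nonneg _) (norm_nonneg _)
      nlinarith [abs_nonneg (((G * (M * ρ₀ * Mᴴ)) j j).im), norm_nonneg ((G * (M * ρ₀ * Mᴴ)) j j), sq_abs (((G * (M * ρ₀ * Mᴴ)) j j).im)]
    rw [div_le_iff₀ hpos, hp j]
    nlinarith [him, hpos, hq0 j]
  calc ∑ j ∈ Finset.univ.filter (fun j => ((M * ρ₀ * Mᴴ) j j).re ≠ 0),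
      (p' j)^2 / ((M * ρ₀ * Mᴴ) j j).re
      ≤ ∑ j ∈ Finset.univ.filter (fun j => ((M * ρ₀ * Mᴴ) j j).re ≠ 0), 4 * q j :=
        Finset.sum_le_sum fun j hj => key j (Finset.mem_filter.mp hj).2
    _ ≤ ∑ j, 4 * q j :=
        Finset.sum_le_sum_of_subset_of_nonneg (Finset.filter_subset _ _)
          (fun j _ _ => mul_nonneg (by norm_num) (hq0 j))
    _ = 4 * ∑ j, q j := by rw [Finset.mul_sum]
    _ ≤ 4 * b^2 := by
        have hb0 : (0:ℝ) ≤ b := le_trans (norm_nonneg G) hb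
        have hnorm2 : ∀ (w : Fin d → ℂ),
            ‖(WithLp.equiv 2 (Fin d → ℂ)).symm w‖^2 = ∑ j, ‖w j‖^2 := by
          intro w
          rw [EuclideanSpace.norm_eq, Real.sq_sqrt (by positivity)]
          exact Finset.sum_congr rfl fun i _ => by rw [WithLp.equiv_symm_apply]
        have hsum : ∑ j, q j ≤ b^2 := by
          calc ∑ j, q j = ∑ k, ∑ j, ‖(G * A) j k‖^2 := Finset.sum_comm
            _ ≤ ∑ k, b^2 * ∑ j, ‖A j k‖^2 := by
                apply Finset.sum_le_sum
                intro k _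
                have e1 : ∑ j, ‖(G * A) j k‖^2
                    = ‖(WithLp.equiv 2 (Fin d → ℂ)).symm (G *ᵥ fun l => A l k)‖^2 := by
                  rw [hnorm2]
                  exact Finset.sum_congr rfl fun jj _ => by rw [Matrix.mul_apply]; rfl
                rw [e1]
                have h1 : ‖(WithLp.equiv 2 (Fin d → ℂ)).symm (G *ᵥ fun l => A l k)‖
                    ≤ ‖G‖ * ‖(WithLp.equiv 2 (Fin d → ℂ)).symm (fun l => A l k)‖ :=
                  Matrix.l2_opNorm_mulVec G ((WithLp.equiv 2 (Fin d → ℂ)).symm (fun l => A l k))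
                calc ‖(WithLp.equiv 2 (Fin d → ℂ)).symm (G *ᵥ fun l => A l k)‖^2
                    ≤ (‖G‖ * ‖(WithLp.equiv 2 (Fin d → ℂ)).symm (fun l => A l k)‖)^2 :=
                      pow_le_pow_left₀ (norm_nonneg _) h1 2
                  _ ≤ b^2 * ∑ j, ‖A j k‖^2 := by
                      rw [mul_pow, ← hnorm2]
                      have hG2 : ‖G‖^2 ≤ b^2 := by nlinarith [norm_nonneg G]
                      exact mul_le_mul_of_nonneg_right hG2 (sq_nonneg _)
            _ = b^2 * ∑ k, ∑ j, ‖A j k‖^2 := by rw [Finset.mul_sum]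
            _ = b^2 * 1 := by
                rw [Finset.sum_comm]
                congr 1
                rw [← htr]
                exact Finset.sum_congr rfl fun j _ => (hpj j).symm
            _ = b^2 := mul_one _
        linarith

end Helpers

section Main

open scoped Matrix.Norms.L2Operator

/-- **Upper bound for controlled energy measurements.** Let `U, S : ℝ → Matrix` be families of
unitary matrices differentiable at `θ₀`, `ρ₀` a state, and `V` a fixed unitary control. With
`Ũ(θ) = S(θ) V U(θ)` and outcome probabilities `p_j(θ) = (Ũ(θ)ρ₀Ũ(θ)†)_{jj}`, the Fisher
information `Σ_{j : p_j(θ₀) ≠ 0} (p_j′(θ₀))²/p_j(θ₀)` is bounded by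
`[σ(g[U]) + σ(g[S])]²`, where `g[W] = i W′(θ₀)W(θ₀)†` are the local generators. -/
theorem controlled_energy_measurement_bound {d : ℕ} [NeZero d]
    (U S : ℝ → Matrix (Fin d) (Fin d) ℂ) (θ₀ : ℝ)
    (hUunit : ∀ θ, (U θ)ᴴ * U θ = 1)
    (hSunit : ∀ θ, (S θ)ᴴ * S θ = 1)
    (ρ₀ : Matrix (Fin d) (Fin d) ℂ)
    (hρ : ρ₀.PosSemidef) (hρtr : ρ₀.trace = 1)
    (V : Matrix (Fin d) (Fin d) ℂ) (hVunit : Vᴴ * V = 1)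
    (U' S' : Matrix (Fin d) (Fin d) ℂ)
    (hU' : ∀ i j, HasDerivAt (fun θ => U θ i j) (U' i j) θ₀)
    (hS' : ∀ i j, HasDerivAt (fun θ => S θ i j) (S' i j) θ₀)
    (p' : Fin d → ℝ)
    (hp' : ∀ j, HasDerivAt
        (fun θ => ((S θ * V * U θ * ρ₀ * (S θ * V * U θ)ᴴ) j j).re) (p' j) θ₀) :
    ∑ j ∈ Finset.univ.filter
        (fun j => ((S θ₀ * V * U θ₀ * ρ₀ * (S θ₀ * V * U θ₀)ᴴ) j j).re ≠ 0),
      (p' j) ^ 2 / ((S θ₀ * V * U θ₀ * ρ₀ * (S θ₀ * V * U θ₀)ᴴ) j j).re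
    ≤ (specGap (Complex.I • (U' * (U θ₀)ᴴ)) + specGap (Complex.I • (S' * (S θ₀)ᴴ))) ^ 2 := by
  classical
  -- unitarity facts at θ₀
  have hUU : U θ₀ * (U θ₀)ᴴ = 1 := mul_eq_one_comm.mp (hUunit θ₀)
  have hW' : (S θ₀ * V)ᴴ * (S θ₀ * V) = 1 := by
    rw [Matrix.conjTranspose_mul, Matrix.mul_assoc, ← Matrix.mul_assoc (S θ₀)ᴴ, hSunit θ₀,
      Matrix.one_mul, hVunit]
  have hW : (S θ₀ * V) * (S θ₀ * V)ᴴ = 1 := mul_eq_one_comm.mp hW'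
  have hM' : (S θ₀ * V * U θ₀)ᴴ * (S θ₀ * V * U θ₀) = 1 := by
    rw [Matrix.conjTranspose_mul, Matrix.mul_assoc, ← Matrix.mul_assoc (S θ₀ * V)ᴴ, hW',
      Matrix.one_mul, hUunit θ₀]
  -- skewness of the generators
  have hUskew : U' * (U θ₀)ᴴ + U θ₀ * U'ᴴ = 0 := skew_of_unitary hUunit hU'
  have hSskew : S' * (S θ₀)ᴴ + S θ₀ * S'ᴴ = 0 := skew_of_unitary hSunit hS'
  have hUct : (U' * (U θ₀)ᴴ)ᴴ = -(U' * (U θ₀)ᴴ) := by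
    rw [Matrix.conjTranspose_mul, Matrix.conjTranspose_conjTranspose]
    exact eq_neg_of_add_eq_zero_left (by rw [add_comm]; exact hUskew)
  have hSct : (S' * (S θ₀)ᴴ)ᴴ = -(S' * (S θ₀)ᴴ) := by
    rw [Matrix.conjTranspose_mul, Matrix.conjTranspose_conjTranspose]
    exact eq_neg_of_add_eq_zero_left (by rw [add_comm]; exact hSskew)
  have hgU : (Complex.I • (U' * (U θ₀)ᴴ)).IsHermitian := isHermitian_I_smul hUct
  have hgS : (Complex.I • (S' * (S θ₀)ᴴ)).IsHermitian := isHermitian_I_smul hSct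
  -- shifted generators
  set cU : ℝ := (Finset.univ.sup' Finset.univ_nonempty hgU.eigenvalues
      + Finset.univ.inf' Finset.univ_nonempty hgU.eigenvalues) / 2 with hcUdef
  set cS : ℝ := (Finset.univ.sup' Finset.univ_nonempty hgS.eigenvalues
      + Finset.univ.inf' Finset.univ_nonempty hgS.eigenvalues) / 2 with hcSdef
  have hbU : ‖Complex.I • (U' * (U θ₀)ᴴ) - (cU : ℂ) • 1‖
      ≤ specGap (Complex.I • (U' * (U θ₀)ᴴ)) / 2 := herm_shift_norm_le hgU
  have hbS : ‖Complex.I • (S' * (S θ₀)ᴴ) - (cS : ℂ) • 1‖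
      ≤ specGap (Complex.I • (S' * (S θ₀)ᴴ)) / 2 := herm_shift_norm_le hgS
  -- the controlled generator, shifted
  set Gm : Matrix (Fin d) (Fin d) ℂ :=
    (Complex.I • (S' * (S θ₀)ᴴ) - (cS : ℂ) • 1)
      + (S θ₀ * V) * (Complex.I • (U' * (U θ₀)ᴴ) - (cU : ℂ) • 1) * (S θ₀ * V)ᴴ with hGmdef
  have hGnorm : ‖Gm‖ ≤ (specGap (Complex.I • (U' * (U θ₀)ᴴ))
      + specGap (Complex.I • (S' * (S θ₀)ᴴ))) / 2 := by
    have hWn : ‖(S θ₀ * V)‖ = 1 := opNorm_unitary hW'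
    have hWn' : ‖(S θ₀ * V)ᴴ‖ = 1 := opNorm_unitary
      (by rw [Matrix.conjTranspose_conjTranspose]; exact hW)
    have h2 : ‖(S θ₀ * V) * (Complex.I • (U' * (U θ₀)ᴴ) - (cU : ℂ) • 1) * (S θ₀ * V)ᴴ‖
        ≤ specGap (Complex.I • (U' * (U θ₀)ᴴ)) / 2 := by
      calc ‖(S θ₀ * V) * (Complex.I • (U' * (U θ₀)ᴴ) - (cU : ℂ) • 1) * (S θ₀ * V)ᴴ‖
          ≤ ‖(S θ₀ * V) * (Complex.I • (U' * (U θ₀)ᴴ) - (cU : ℂ) • 1)‖ * ‖(S θ₀ * V)ᴴ‖ :=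
            Matrix.l2_opNorm_mul _ _
        _ ≤ (‖(S θ₀ * V)‖ * ‖Complex.I • (U' * (U θ₀)ᴴ) - (cU : ℂ) • 1‖) * ‖(S θ₀ * V)ᴴ‖ :=
            mul_le_mul_of_nonneg_right (Matrix.l2_opNorm_mul _ _) (norm_nonneg _)
        _ = ‖Complex.I • (U' * (U θ₀)ᴴ) - (cU : ℂ) • 1‖ := by
            rw [hWn, hWn', one_mul, mul_one]
        _ ≤ specGap (Complex.I • (U' * (U θ₀)ᴴ)) / 2 := hbU
    calc ‖Gm‖ ≤ ‖Complex.I • (S' * (S θ₀)ᴴ) - (cS : ℂ) • 1‖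
        + ‖(S θ₀ * V) * (Complex.I • (U' * (U θ₀)ᴴ) - (cU : ℂ) • 1) * (S θ₀ * V)ᴴ‖ :=
          norm_add_le _ _
      _ ≤ (specGap (Complex.I • (U' * (U θ₀)ᴴ))
          + specGap (Complex.I • (S' * (S θ₀)ᴴ))) / 2 := by
          have := hbS
          linarith
  -- derivative computation
  have hVc : ∀ i j, HasDerivAt (fun _ : ℝ => V i j)
      ((0 : Matrix (Fin d) (Fin d) ℂ) i j) θ₀ := entry_const V
  have hρc : ∀ i j, HasDerivAt (fun _ : ℝ => ρ₀ i j)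
      ((0 : Matrix (Fin d) (Fin d) ℂ) i j) θ₀ := entry_const ρ₀
  have hSV : ∀ i j, HasDerivAt (fun θ => (S θ * V) i j) ((S' * V) i j) θ₀ := by
    intro i j
    have := entry_mul hS' hVc i j
    simpa using this
  have hMde : ∀ i j, HasDerivAt (fun θ => (S θ * V * U θ) i j)
      ((S' * V * U θ₀ + S θ₀ * V * U') i j) θ₀ := by
    intro i j
    exact entry_mul hSV hU' i j
  have hMρde : ∀ i j, HasDerivAt (fun θ => (S θ * V * U θ * ρ₀) i j)
      (((S' * V * U θ₀ + S θ₀ * V * U') * ρ₀) i j) θ₀ := by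
    intro i j
    have := entry_mul hMde hρc i j
    simpa using this
  have hFde : ∀ j, HasDerivAt (fun θ => (S θ * V * U θ * ρ₀ * (S θ * V * U θ)ᴴ) j j)
      (((S' * V * U θ₀ + S θ₀ * V * U') * ρ₀ * (S θ₀ * V * U θ₀)ᴴ
        + S θ₀ * V * U θ₀ * ρ₀ * (S' * V * U θ₀ + S θ₀ * V * U')ᴴ) j j) θ₀ := by
    intro j
    exact entry_mul hMρde (entry_ct hMde) j j
  have hp'eq : ∀ j, p' j = (((S' * V * U θ₀ + S θ₀ * V * U') * ρ₀ * (S θ₀ * V * U θ₀)ᴴ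
        + S θ₀ * V * U θ₀ * ρ₀ * (S' * V * U θ₀ + S θ₀ * V * U')ᴴ) j j).re :=
    fun j => (hp' j).unique (entry_re (hFde j))
  -- the unshifted generator K and its properties
  set K : Matrix (Fin d) (Fin d) ℂ :=
    S' * (S θ₀)ᴴ + (S θ₀ * V) * (U' * (U θ₀)ᴴ) * (S θ₀ * V)ᴴ with hKdef
  have hKM : K * (S θ₀ * V * U θ₀) = S' * V * U θ₀ + S θ₀ * V * U' := by
    rw [hKdef, Matrix.add_mul]
    congr 1
    · rw [Matrix.mul_assoc S' (S θ₀)ᴴ _, ← Matrix.mul_assoc (S θ₀)ᴴ (S θ₀ * V) (U θ₀),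
        ← Matrix.mul_assoc (S θ₀)ᴴ (S θ₀) V, hSunit θ₀, Matrix.one_mul, ← Matrix.mul_assoc]
    · rw [show S θ₀ * V * U θ₀ = (S θ₀ * V) * U θ₀ from rfl, sand hW',
        Matrix.mul_assoc U' (U θ₀)ᴴ (U θ₀), hUunit θ₀, Matrix.mul_one]
  have hKct : Kᴴ = -K := by
    have h2 : (S θ₀ * V * (U' * (U θ₀)ᴴ) * (S θ₀ * V)ᴴ)ᴴ
        = -(S θ₀ * V * (U' * (U θ₀)ᴴ) * (S θ₀ * V)ᴴ) := by
      rw [Matrix.conjTranspose_mul (S θ₀ * V * (U' * (U θ₀)ᴴ)) ((S θ₀ * V)ᴴ),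
        Matrix.conjTranspose_conjTranspose,
        Matrix.conjTranspose_mul (S θ₀ * V) (U' * (U θ₀)ᴴ), hUct,
        Matrix.neg_mul, Matrix.mul_neg]
      simp [Matrix.mul_assoc]
    rw [hKdef, Matrix.conjTranspose_add, hSct, h2, neg_add]
  -- relation between K and Gm
  have hGmK : Gm = Complex.I • K - (((cS + cU : ℝ)) : ℂ) • 1 := by
    rw [hGmdef, hKdef]
    rw [Matrix.mul_sub, Matrix.sub_mul]
    rw [Matrix.mul_smul, Matrix.smul_mul, Matrix.mul_smul, Matrix.smul_mul, Matrix.mul_one, hW]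
    rw [smul_add]
    push_cast
    module
  have hρA : (S θ₀ * V * U θ₀ * ρ₀ * (S θ₀ * V * U θ₀)ᴴ).PosSemidef :=
    hρ.mul_mul_conjTranspose_same _
  have him0 : ∀ j, ((S θ₀ * V * U θ₀ * ρ₀ * (S θ₀ * V * U θ₀)ᴴ) j j).im = 0 := by
    intro j
    have h := congrFun (congrFun hρA.1 j) j
    rw [Matrix.conjTranspose_apply] at h
    exact Complex.conj_eq_iff_im.mp h
  -- the derivative in terms of K
  have hF'eq : (S' * V * U θ₀ + S θ₀ * V * U') * ρ₀ * (S θ₀ * V * U θ₀)ᴴ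
      + S θ₀ * V * U θ₀ * ρ₀ * (S' * V * U θ₀ + S θ₀ * V * U')ᴴ
      = K * (S θ₀ * V * U θ₀ * ρ₀ * (S θ₀ * V * U θ₀)ᴴ)
        - (S θ₀ * V * U θ₀ * ρ₀ * (S θ₀ * V * U θ₀)ᴴ) * K := by
    rw [← hKM, Matrix.conjTranspose_mul K (S θ₀ * V * U θ₀), hKct]
    simp only [sub_eq_add_neg, Matrix.mul_assoc, Matrix.mul_neg, Matrix.neg_mul]
  -- p' in terms of Gm
  have hpG : ∀ j, p' j = 2 * ((Gm * (S θ₀ * V * U θ₀ * ρ₀ * (S θ₀ * V * U θ₀)ᴴ)) j j).im := by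
    intro j
    rw [hp'eq j, hF'eq]
    have h1 : (S θ₀ * V * U θ₀ * ρ₀ * (S θ₀ * V * U θ₀)ᴴ) * K
        = -((K * (S θ₀ * V * U θ₀ * ρ₀ * (S θ₀ * V * U θ₀)ᴴ))ᴴ) := by
      rw [Matrix.conjTranspose_mul K (S θ₀ * V * U θ₀ * ρ₀ * (S θ₀ * V * U θ₀)ᴴ), hKct,
        hρA.1.eq, Matrix.mul_neg, neg_neg]
    rw [h1, sub_neg_eq_add]
    have hK2 : K = (-Complex.I) • Gm + ((-Complex.I) * (((cS + cU : ℝ)) : ℂ)) • 1 := by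
      have h2 : Complex.I • K = Gm + (((cS + cU : ℝ)) : ℂ) • 1 := by
        rw [hGmK]; abel
      calc K = ((-Complex.I) * Complex.I) • K := by
              norm_num [Complex.I_mul_I]
        _ = (-Complex.I) • (Complex.I • K) := by rw [← smul_smul]
        _ = (-Complex.I) • (Gm + (((cS + cU : ℝ)) : ℂ) • 1) := by rw [h2]
        _ = (-Complex.I) • Gm + ((-Complex.I) * (((cS + cU : ℝ)) : ℂ)) • 1 := by
              rw [smul_add, smul_smul]
    rw [hK2]
    simp only [Matrix.add_mul, Matrix.smul_mul, Matrix.one_mul, Matrix.add_apply,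
      Matrix.smul_apply, Matrix.conjTranspose_apply, smul_eq_mul]
    set z := (Gm * (S θ₀ * V * U θ₀ * ρ₀ * (S θ₀ * V * U θ₀)ᴴ)) j j with hzdef
    set w := (S θ₀ * V * U θ₀ * ρ₀ * (S θ₀ * V * U θ₀)ᴴ) j j with hwdef
    have hwim : w.im = 0 := him0 j
    simp [Complex.add_re, Complex.conj_re, Complex.mul_re, Complex.mul_im, Complex.neg_re,
      Complex.neg_im, Complex.I_re, Complex.I_im, Complex.ofReal_re, Complex.ofReal_im, hwim]
    ring
  -- conclude via fisher_bound
  calc ∑ j ∈ Finset.univ.filter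
        (fun j => ((S θ₀ * V * U θ₀ * ρ₀ * (S θ₀ * V * U θ₀)ᴴ) j j).re ≠ 0),
      (p' j) ^ 2 / ((S θ₀ * V * U θ₀ * ρ₀ * (S θ₀ * V * U θ₀)ᴴ) j j).re
      ≤ 4 * ((specGap (Complex.I • (U' * (U θ₀)ᴴ))
          + specGap (Complex.I • (S' * (S θ₀)ᴴ))) / 2) ^ 2 :=
        fisher_bound ρ₀ hρ hρtr (S θ₀ * V * U θ₀) Gm hM' _ hGnorm p' hpG
    _ = (specGap (Complex.I • (U' * (U θ₀)ᴴ))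
          + specGap (Complex.I • (S' * (S θ₀)ᴴ))) ^ 2 := by ring

end Main
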